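/- arXiv:2209.07475 — 3 statements merged into one kernel-verified Lean document; each statement's English description precedes it below -/
import Mathlib

section
/- Let v₁, v₂, t be neurons with incoming weights W₁, W₂, W_t : Fin m → ℝ and biases b₁, b₂, b_t, with ρ₁, ρ₂ > 0 such that W_t = ρ₁ • W₁ + ρ₂ • W₂ and b_t = ρ₁*b₁ + ρ₂*b₂. For any input x, if (∑ j, W₁(j)*x(j) + b₁) and (∑ j, W₂(j)*x(j) + b₂) have the same sign (their product is ≥ 0), then ReLU(∑ j, W_t(j)*x(j) + b_t) = ρ₁*ReLU(∑ j, W₁(j)*x(j) + b₁) + ρ₂*ReLU(∑ j, W₂(j)*x(j) + b₂). -/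
noncomputable def ReLU (x : ℝ) : ℝ := max x 0

theorem prune_linear_combination_neuron (m : ℕ) (W₁ W₂ W_t : Fin m → ℝ)
    (b₁ b₂ b_t ρ₁ ρ₂ : ℝ) (hρ₁ : 0 < ρ₁) (hρ₂ : 0 < ρ₂)
    (hW : W_t = ρ₁ • W₁ + ρ₂ • W₂) (hb : b_t = ρ₁ * b₁ + ρ₂ * b₂)
    (x : Fin m → ℝ)
    (hsign : (∑ j, W₁ j * x j + b₁) * (∑ j, W₂ j * x j + b₂) ≥ 0) :
    ReLU (∑ j, W_t j * x j + b_t) =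
      ρ₁ * ReLU (∑ j, W₁ j * x j + b₁) + ρ₂ * ReLU (∑ j, W₂ j * x j + b₂) := by
  set a := ∑ j, W₁ j * x j + b₁ with ha
  set b := ∑ j, W₂ j * x j + b₂ with hb2
  have ht : ∑ j, W_t j * x j + b_t = ρ₁ * a + ρ₂ * b := by
    subst hW hb
    simp only [Pi.add_apply, Pi.smul_apply, smul_eq_mul, ha, hb2]
    simp only [add_mul, mul_assoc, Finset.sum_add_distrib, ← Finset.mul_sum]
    ring
  rw [ht]
  unfold ReLU
  rcases mul_nonneg_iff.mp hsign with ⟨h1, h2⟩ | ⟨h1, h2⟩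
  · rw [max_eq_left h1, max_eq_left h2,
      max_eq_left (by positivity)]
  · rw [max_eq_right h1, max_eq_right h2, max_eq_right]
    · ring
    · have := mul_nonpos_of_nonneg_of_nonpos hρ₁.le h1
      have := mul_nonpos_of_nonneg_of_nonpos hρ₂.le h2
      linarith
end

section
/- Model a one-hidden-layer network as: hidden layer a finite set S with weights W : Fin m → S → ℝ and bias b : S → ℝ, output weights V : S → ℝ, output value F(x) = ∑ s ∈ S, V(s) * ReLU(∑ j, W(j,s)*x(j) + b(s)). Suppose ~ is an equivalence relation on S and ρ : S → ℝ with ρ(s) > 0 for all s, such that whenever s ~ t: ρ(s)*b(s) = ρ(t)*b(t) and for every j, ρ(s)*W(j,s) = ρ(t)*W(j,t). Let R ⊆ S be a set of representatives (one per equivalence class) and define V'(r) = ∑ s ~ r, ρ(r) * V(s) / ρ(s), W'(j,r) = W(j,r), b'(r) = b(r). Then for every input x, ∑ r ∈ R, V'(r) * ReLU(∑ j, W'(j,r)*x(j) + b'(r)) = F(x). -/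
lemma ReLU_smul (c y : ℝ) (hc : 0 ≤ c) : ReLU (c * y) = c * ReLU y := by
  unfold ReLU
  rcases le_or_gt y 0 with h | h
  · rw [max_eq_right h, max_eq_right (mul_nonpos_of_nonneg_of_nonpos hc h), mul_zero]
  · rw [max_eq_left h.le, max_eq_left (mul_nonneg hc h.le)]

theorem quotient_network_preserves_semantics
    (m : ℕ) (S : Type*) [Fintype S] [DecidableEq S]
    (W : Fin m → S → ℝ) (b : S → ℝ) (V : S → ℝ)
    (r : S → S → Prop) [DecidableRel r] (hr : Equivalence r)
    (ρ : S → ℝ) (hρ : ∀ s, 0 < ρ s)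
    (hb : ∀ s t, r s t → ρ s * b s = ρ t * b t)
    (hW : ∀ s t, r s t → ∀ j, ρ s * W j s = ρ t * W j t)
    (R : Finset S) (hR : ∀ s : S, ∃! t, t ∈ R ∧ r s t)
    (x : Fin m → ℝ) :
    ∑ rep ∈ R,
        (∑ s ∈ Finset.univ.filter (fun s => r s rep), ρ rep * V s / ρ s) *
          ReLU (∑ j, W j rep * x j + b rep) =
      ∑ s, V s * ReLU (∑ j, W j s * x j + b s) := by
  set A : S → ℝ := fun s => ∑ j, W j s * x j + b s with hA
  have key : ∀ s t, r s t → ρ s * A s = ρ t * A t := by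
    intro s t hst
    simp only [hA, mul_add, Finset.mul_sum]
    rw [hb s t hst]
    congr 1
    exact Finset.sum_congr rfl fun j _ => by rw [← mul_assoc, ← mul_assoc, hW s t hst j]
  choose rep hrep hrepu using hR
  have hrmem : ∀ s, rep s ∈ R := fun s => (hrep s).1
  have hrrel : ∀ s, r s (rep s) := fun s => (hrep s).2
  -- rewrite each summand
  have inner : ∀ t ∈ R,
      (∑ s ∈ Finset.univ.filter (fun s => r s t), ρ t * V s / ρ s) * ReLU (A t)
      = ∑ s ∈ Finset.univ.filter (fun s => r s t), V s * ReLU (A s) := by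
    intro t ht
    rw [Finset.sum_mul]
    refine Finset.sum_congr rfl fun s hs => ?_
    have hst : r s t := (Finset.mem_filter.mp hs).2
    have h1 : A t = (ρ s / ρ t) * A s := by
      rw [div_mul_eq_mul_div, eq_div_iff (hρ t).ne']
      linarith [key s t hst]
    rw [h1, ReLU_smul _ _ (div_nonneg (hρ s).le (hρ t).le)]
    have h2 := (hρ s).ne'
    have h3 := (hρ t).ne'
    field_simp
  rw [Finset.sum_congr rfl inner]
  -- fiber sum
  have hfib : ∀ t ∈ R, Finset.univ.filter (fun s => r s t)
      = Finset.univ.filter (fun s => rep s = t) := by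
    intro t ht
    ext s
    simp only [Finset.mem_filter, Finset.mem_univ, true_and]
    constructor
    · intro h; exact (hrepu s t ⟨ht, h⟩).symm
    · intro h; rw [← h]; exact hrrel s
  rw [Finset.sum_congr rfl fun t ht => by rw [hfib t ht]]
  exact Finset.sum_fiberwise_of_maps_to (fun s _ => hrmem s) _
end

section
/- Suppose for neurons v, t with parameters (W_v, b_v), (W_t, b_t) ∈ (Fin m → ℝ) × ℝ and both ReLU activations, the output values agree up to the positive factor ρ on every input (i.e., for all x, ReLU(⟨W_t, x⟩ + b_t) = ρ * ReLU(⟨W_v, x⟩ + b_v)) and W_v ≠ 0. Then W_t = ρ • W_v and b_t = ρ * b_v. -/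
theorem proportional_activation_forces_proportional_params
    (m : ℕ) (W_v W_t : Fin m → ℝ) (b_v b_t ρ : ℝ) (hρ : 0 < ρ)
    (hW : W_v ≠ 0)
    (h : ∀ x : Fin m → ℝ,
      ReLU (∑ j, W_t j * x j + b_t) = ρ * ReLU (∑ j, W_v j * x j + b_v)) :
    W_t = ρ • W_v ∧ b_t = ρ * b_v := by
  have hS : (0:ℝ) < ∑ j, W_v j * W_v j := by
    obtain ⟨j, hj⟩ : ∃ j, W_v j ≠ 0 := by
      by_contra hc
      push_neg at hc
      exact hW (funext hc)
    apply Finset.sum_pos' (fun i _ => mul_self_nonneg _)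
    exact ⟨j, Finset.mem_univ j, mul_self_pos.2 hj⟩
  set S : ℝ := ∑ j, W_v j * W_v j with hSdef
  have key : ∀ x : Fin m → ℝ,
      (∑ j, W_t j * x j) + b_t = ρ * ((∑ j, W_v j * x j) + b_v) := by
    intro x
    have expand : ∀ (W : Fin m → ℝ) (c : ℝ),
        (∑ j, W j * (x j + c * W_v j)) = (∑ j, W j * x j) + c * ∑ j, W j * W_v j := by
      intro W c
      rw [Finset.mul_sum, ← Finset.sum_add_distrib]
      exact Finset.sum_congr rfl fun i _ => by ring
    have hpos : ∀ c : ℝ, 0 < (∑ j, W_v j * x j) + c * S + b_v →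
        (∑ j, W_t j * x j) + c * (∑ j, W_t j * W_v j) + b_t
          = ρ * ((∑ j, W_v j * x j) + c * S + b_v) := by
      intro c hc
      have hh := h (fun j => x j + c * W_v j)
      simp only [ReLU] at hh
      rw [expand W_t c, expand W_v c] at hh
      rw [max_eq_left hc.le] at hh
      have hρg : 0 < ρ * ((∑ j, W_v j * x j) + c * S + b_v) := mul_pos hρ hc
      rcases le_or_gt ((∑ j, W_t j * x j) + c * (∑ j, W_t j * W_v j) + b_t) 0 with hle | hlt
      · rw [max_eq_right hle] at hh; linarith
      · rwa [max_eq_left hlt.le] at hh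
    set t : ℝ := |(∑ j, W_v j * x j) + b_v| + 1 with ht
    have habs : -|(∑ j, W_v j * x j) + b_v| ≤ (∑ j, W_v j * x j) + b_v :=
      neg_abs_le _
    have hc1S : (t / S) * S = t := div_mul_cancel₀ t hS.ne'
    have hc2S : (2 * t / S) * S = 2 * t := div_mul_cancel₀ (2 * t) hS.ne'
    have e1 := hpos (t / S) (by rw [hc1S]; simp only [ht]; linarith)
    have e2 := hpos (2 * t / S) (by rw [hc2S]; simp only [ht]; linarith [abs_nonneg ((∑ j, W_v j * x j) + b_v)])
    rw [hc1S] at e1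
    rw [hc2S] at e2
    ring_nf at e1 e2 ⊢
    linarith
  have hb : b_t = ρ * b_v := by
    have := key 0
    simpa using this
  refine ⟨funext fun j => ?_, hb⟩
  have hk := key (Pi.single j (1:ℝ))
  have hs : ∀ (W : Fin m → ℝ), (∑ i, W i * (Pi.single j (1:ℝ) : Fin m → ℝ) i) = W j := by
    intro W
    simp [Pi.single_apply, mul_ite]
  rw [hs W_t, hs W_v] at hk
  show W_t j = ρ * W_v j
  linarith [hk, hb]
end
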